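/- Let X, Y : [0,T] → ℝ^d be continuously differentiable and define the signature kernel K(t,v) = Σ_{I} S^{(I)}(X)_{0,t} · S^{(I)}(Y)_{0,v}, where the sum is over all words I over {1,…,d} and S^{(I)} denotes the iterated-integral signature coefficient. Then K is well-defined (the series converges absolutely), and K satisfies the Goursat integral equation K(t,v) = 1 + ∫_0^t ∫_0^v K(s,u) ⟨X′(s), Y′(u)⟩ du ds for all (t,v) ∈ [0,T]². -/

import Mathlib

open MeasureTheory intervalIntegral
open scoped Nat

/-- The signature coefficient `S^{(I)}_{s,t}` of a path with coordinate
derivatives `X' i`. -/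
noncomputable def Sig (d : ℕ) (X' : Fin d → ℝ → ℝ) : List (Fin d) → ℝ → ℝ → ℝ
  | [], _, _ => 1
  | i :: I, s, t => ∫ u in s..t, X' i u * Sig d X' I u t

section aux

variable {d : ℕ} {X' : Fin d → ℝ → ℝ}

lemma sig_cont (hX' : ∀ i, Continuous (X' i)) (I : List (Fin d)) :
    Continuous fun p : ℝ × ℝ => Sig d X' I p.1 p.2 := by
  induction I with
  | nil => simpa [Sig] using continuous_const
  | cons i I ih =>
    have hF : Continuous (Function.uncurry fun (p : ℝ × ℝ) (u : ℝ) =>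
        X' i u * Sig d X' I u p.2) := by
      exact ((hX' i).comp continuous_snd).mul
        (ih.comp (continuous_snd.prodMk continuous_fst.snd))
    have h2 : Continuous fun p : ℝ × ℝ => ∫ u in (0:ℝ)..p.2, X' i u * Sig d X' I u p.2 :=
      continuous_parametric_intervalIntegral_of_continuous (f := fun (p : ℝ × ℝ) u => X' i u * Sig d X' I u p.2) hF continuous_snd
    have h1 : Continuous fun p : ℝ × ℝ => ∫ u in (0:ℝ)..p.1, X' i u * Sig d X' I u p.2 :=
      continuous_parametric_intervalIntegral_of_continuous (f := fun (p : ℝ × ℝ) u => X' i u * Sig d X' I u p.2) hF continuous_fst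
    have key : ∀ p : ℝ × ℝ, Sig d X' (i :: I) p.1 p.2 =
        (∫ u in (0:ℝ)..p.2, X' i u * Sig d X' I u p.2)
          - ∫ u in (0:ℝ)..p.1, X' i u * Sig d X' I u p.2 := by
      intro p
      have hInt : ∀ a b : ℝ, IntervalIntegrable (fun u => X' i u * Sig d X' I u p.2)
          volume a b := by
        intro a b
        exact ((hX' i).mul (ih.comp (continuous_id.prodMk continuous_const)))
          |>.intervalIntegrable _ _
      rw [Sig, ← integral_interval_sub_left (hInt 0 p.2) (hInt 0 p.1)]
    exact (h2.sub h1).congr (fun p => (key p).symm)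

end aux

lemma triangle_swap (f : ℝ → ℝ → ℝ) (hf : Continuous fun p : ℝ × ℝ => f p.1 p.2)
    {s t : ℝ} (hst : s ≤ t) :
    (∫ u in s..t, ∫ w in u..t, f u w) = ∫ w in s..t, ∫ u in s..w, f u w := by
  obtain ⟨C, hC⟩ := (isCompact_Icc.prod isCompact_Icc).exists_bound_of_continuousOn
    (s := Set.Icc s t ×ˢ Set.Icc s t) hf.continuousOn
  set g : ℝ → ℝ → ℝ := fun u w => if u ≤ w then f u w else 0 with hg
  have hμ : IsFiniteMeasure (volume.restrict (Set.Ioc s t)) := by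
    constructor
    rw [Measure.restrict_apply_univ, Real.volume_Ioc]
    exact ENNReal.ofReal_lt_top
  have hgm : StronglyMeasurable (Function.uncurry g) := by
    have : Function.uncurry g =
        {p : ℝ × ℝ | p.1 ≤ p.2}.indicator (fun p : ℝ × ℝ => f p.1 p.2) := by
      ext p
      simp [Function.uncurry, Set.indicator_apply, hg, Set.mem_setOf_eq]
    rw [this]
    exact hf.stronglyMeasurable.indicator
      ((isClosed_le continuous_fst continuous_snd).measurableSet)
  have hgi : Integrable (Function.uncurry g)
      ((volume.restrict (Set.Ioc s t)).prod (volume.restrict (Set.Ioc s t))) := by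
    refine ⟨hgm.aestronglyMeasurable, ?_⟩
    apply HasFiniteIntegral.of_bounded (C := max C 0)
    rw [Measure.prod_restrict]
    filter_upwards [ae_restrict_mem (measurableSet_Ioc.prod measurableSet_Ioc)] with p hp
    rcases le_or_gt p.1 p.2 with h | h
    · have : ‖Function.uncurry g p‖ = ‖f p.1 p.2‖ := by
        simp [Function.uncurry, hg, h]
      rw [this]
      exact le_max_of_le_left (hC p ⟨Set.Ioc_subset_Icc_self hp.1, Set.Ioc_subset_Icc_self hp.2⟩)
    · have : Function.uncurry g p = 0 := by
        simp [Function.uncurry, hg, not_le.2 h]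
      simp [this]
  have swap := integral_integral_swap (f := g) hgi
  calc (∫ u in s..t, ∫ w in u..t, f u w)
      = ∫ u in Set.Ioc s t, ∫ w in Set.Ioc s t, g u w := by
        rw [integral_of_le hst]
        refine setIntegral_congr_fun measurableSet_Ioc fun u hu => ?_
        have huw : ∀ w, g u w = (Set.Ici u).indicator (f u) w := by
          intro w; simp [hg, Set.indicator_apply, Set.mem_Ici]
        rw [integral_of_le hu.2]
        simp_rw [huw]
        rw [setIntegral_indicator measurableSet_Ici]
        have : Set.Ioc s t ∩ Set.Ici u = Set.Icc u t := by
          ext w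
          simp only [Set.mem_inter_iff, Set.mem_Ioc, Set.mem_Ici, Set.mem_Icc]
          exact ⟨fun h => ⟨h.2, h.1.2⟩, fun h => ⟨⟨lt_of_lt_of_le hu.1 h.1, h.2⟩, h.1⟩⟩
        rw [this, integral_Icc_eq_integral_Ioc]
    _ = ∫ w in Set.Ioc s t, ∫ u in Set.Ioc s t, g u w := swap
    _ = ∫ w in s..t, ∫ u in s..w, f u w := by
        rw [integral_of_le hst]
        refine setIntegral_congr_fun measurableSet_Ioc fun w hw => ?_
        have huw : ∀ u, g u w = (Set.Iic w).indicator (fun u => f u w) u := by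
          intro u; simp [hg, Set.indicator_apply, Set.mem_Iic]
        simp_rw [huw]
        rw [setIntegral_indicator measurableSet_Iic]
        have : Set.Ioc s t ∩ Set.Iic w = Set.Ioc s w := by
          ext u
          simp only [Set.mem_inter_iff, Set.mem_Ioc, Set.mem_Iic]
          exact ⟨fun h => ⟨h.1.1, h.2⟩, fun h => ⟨⟨h.1, le_trans h.2 hw.2⟩, h.2⟩⟩
        rw [this, integral_of_le (le_of_lt hw.1)]
section aux2

variable {d : ℕ} {X' : Fin d → ℝ → ℝ}

lemma sig_cont_left (hX' : ∀ i, Continuous (X' i)) (I : List (Fin d)) (t : ℝ) :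
    Continuous fun u : ℝ => Sig d X' I u t :=
  (sig_cont hX' I).comp (continuous_id.prodMk continuous_const)

lemma sig_cont_right (hX' : ∀ i, Continuous (X' i)) (I : List (Fin d)) (s : ℝ) :
    Continuous fun u : ℝ => Sig d X' I s u :=
  (sig_cont hX' I).comp (continuous_const.prodMk continuous_id)

lemma sig_concat (hX' : ∀ i, Continuous (X' i)) (I : List (Fin d)) (i : Fin d) :
    ∀ {s t : ℝ}, s ≤ t →
      Sig d X' (I ++ [i]) s t = ∫ w in s..t, Sig d X' I s w * X' i w := by
  induction I with
  | nil =>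
    intro s t _
    simp only [List.nil_append, Sig]
    exact intervalIntegral.integral_congr fun u _ => by simp [Sig, mul_comm]
  | cons j J ih =>
    intro s t hst
    have hcont : Continuous fun p : ℝ × ℝ => X' j p.1 * Sig d X' J p.1 p.2 * X' i p.2 :=
      (((hX' j).comp continuous_fst).mul (sig_cont hX' J)).mul ((hX' i).comp continuous_snd)
    calc Sig d X' ((j :: J) ++ [i]) s t
        = ∫ u in s..t, X' j u * Sig d X' (J ++ [i]) u t := rfl
      _ = ∫ u in s..t, ∫ w in u..t, X' j u * Sig d X' J u w * X' i w := by
          refine intervalIntegral.integral_congr fun u hu => ?_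
          rw [Set.uIcc_of_le hst] at hu
          rw [ih hu.2, ← intervalIntegral.integral_const_mul]
          exact intervalIntegral.integral_congr fun w _ => by ring
      _ = ∫ w in s..t, ∫ u in s..w, X' j u * Sig d X' J u w * X' i w :=
          triangle_swap _ hcont hst
      _ = ∫ w in s..t, Sig d X' (j :: J) s w * X' i w := by
          refine intervalIntegral.integral_congr fun w _ => ?_
          rw [show Sig d X' (j :: J) s w = ∫ u in s..w, X' j u * Sig d X' J u w from rfl,
            ← intervalIntegral.integral_mul_const]

lemma sig_bound {a b M : ℝ} (hM0 : 0 ≤ M) (hX' : ∀ i, Continuous (X' i))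
    (hM : ∀ (i : Fin d) u, u ∈ Set.Icc a b → |X' i u| ≤ M) :
    ∀ (I : List (Fin d)) {s t : ℝ}, a ≤ s → s ≤ t → t ≤ b →
      |Sig d X' I s t| ≤ (M * (t - s)) ^ I.length / (I.length)! := by
  intro I
  induction I with
  | nil => intro s t _ hst _; simp [Sig]
  | cons i I ih =>
    intro s t has hst htb
    set n := I.length with hn
    have hts : 0 ≤ t - s := sub_nonneg.2 hst
    have key : |∫ u in s..t, X' i u * Sig d X' I u t|
        ≤ ∫ u in s..t, M * ((M * (t - u)) ^ n / n !) := by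
      refine (intervalIntegral.abs_integral_le_integral_abs hst).trans ?_
      refine intervalIntegral.integral_mono_on hst ?_ ?_ ?_
      · exact ((hX' i).mul (sig_cont_left hX' I t)).abs.intervalIntegrable _ _
      · exact (continuous_const.mul
          (((continuous_const.mul (continuous_const.sub continuous_id)).pow n).div_const
            _)).intervalIntegrable _ _
      · intro u hu
        rw [abs_mul]
        have h1 : |X' i u| ≤ M := hM i u ⟨le_trans has hu.1, le_trans hu.2 htb⟩
        have h2 : |Sig d X' I u t| ≤ (M * (t - u)) ^ n / n ! :=
          ih (le_trans has hu.1) hu.2 htb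
        exact mul_le_mul h1 h2 (abs_nonneg _)
          hM0
    have hcomp : (∫ u in s..t, M * ((M * (t - u)) ^ n / n !))
        = (M * (t - s)) ^ (n + 1) / (n + 1)! := by
      have heq : ∀ u : ℝ, M * ((M * (t - u)) ^ n / n !)
          = (M ^ (n + 1) / n !) * (t - u) ^ n := by
        intro u; rw [mul_pow]; ring
      simp_rw [heq]
      rw [intervalIntegral.integral_const_mul]
      have : (∫ u in s..t, (t - u) ^ n) = (t - s) ^ (n + 1) / (n + 1) := by
        rw [intervalIntegral.integral_comp_sub_left (fun x => x ^ n) t]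
        rw [integral_pow, sub_self, zero_pow (Nat.succ_ne_zero n), sub_zero]
      rw [this, Nat.factorial_succ, mul_pow]
      have hfac : (n ! : ℝ) ≠ 0 := Nat.cast_ne_zero.2 (Nat.factorial_ne_zero n)
      have hn1 : ((n : ℝ) + 1) ≠ 0 := by positivity
      push_cast
      rw [div_mul_div_comm]
      rw [div_eq_div_iff (by positivity) (by positivity)]
      ring
    have : Sig d X' (i :: I) s t = ∫ u in s..t, X' i u * Sig d X' I u t := rfl
    rw [this, List.length_cons]
    exact key.trans_eq hcomp

lemma summable_list_aux (d : ℕ) {B : ℝ} (hB : 0 ≤ B) :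
    Summable (fun I : List (Fin d) => B ^ I.length / (I.length)!) := by
  have he := (List.equivSigmaTuple (α := Fin d)).symm.summable_iff
    (f := fun I : List (Fin d) => B ^ I.length / (I.length)!)
  rw [← he]
  have hfun : (fun x : Σ n, Fin n → Fin d =>
      B ^ (List.equivSigmaTuple.symm x).length / ((List.equivSigmaTuple.symm x).length)!)
      = fun x => B ^ x.1 / (x.1)! := by
    ext ⟨n, c⟩
    simp [List.equivSigmaTuple, List.length_ofFn]
  rw [show ((fun I : List (Fin d) => B ^ I.length / (I.length)!) ∘ List.equivSigmaTuple.symm)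
      = fun x : Σ n, Fin n → Fin d => B ^ x.1 / (x.1)! from hfun]
  rw [summable_sigma_of_nonneg (fun x => by positivity)]
  constructor
  · intro n; exact Summable.of_finite
  · have : (fun n : ℕ => ∑' _ : Fin n → Fin d, B ^ n / n !)
        = fun n : ℕ => ((d : ℝ) * B) ^ n / n ! := by
      ext n
      rw [tsum_const]
      simp only [Nat.card_eq_fintype_card, Fintype.card_fun, Fintype.card_fin, nsmul_eq_mul]
      push_cast
      rw [mul_pow]
      ring
    rw [this]
    exact Real.summable_pow_div_factorial _

end aux2
set_option maxHeartbeats 2000000 in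
/-- the signature kernel
`K(t,v) = Σ_I S^{(I)}(X)_{0,t} S^{(I)}(Y)_{0,v}` is well-defined (the series
converges absolutely) and satisfies the Goursat integral equation
`K(t,v) = 1 + ∫_0^t ∫_0^v K(s,u) ⟨X'(s), Y'(u)⟩ du ds`. -/
theorem stmt16 (d : ℕ) (T : ℝ) (hT : 0 ≤ T)
    (X Y : ℝ → Fin d → ℝ) (X' Y' : Fin d → ℝ → ℝ)
    (hX : ∀ i t, HasDerivAt (fun u => X u i) (X' i t) t)
    (hY : ∀ i t, HasDerivAt (fun u => Y u i) (Y' i t) t)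
    (hX' : ∀ i, Continuous (X' i)) (hY' : ∀ i, Continuous (Y' i))
    (t v : ℝ) (ht : t ∈ Set.Icc (0 : ℝ) T) (hv : v ∈ Set.Icc (0 : ℝ) T) :
    Summable (fun I : List (Fin d) => Sig d X' I 0 t * Sig d Y' I 0 v) ∧
    (∑' I : List (Fin d), Sig d X' I 0 t * Sig d Y' I 0 v)
      = 1 + ∫ s in (0 : ℝ)..t, ∫ u in (0 : ℝ)..v,
          (∑' I : List (Fin d), Sig d X' I 0 s * Sig d Y' I 0 u)
            * (∑ i : Fin d, X' i s * Y' i u) := by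
  obtain ⟨t0, tT⟩ := ht
  obtain ⟨v0, vT⟩ := hv
  -- uniform bounds for the derivatives on `[0, T]`
  have hbd : ∀ Z' : Fin d → ℝ → ℝ, (∀ i, Continuous (Z' i)) →
      ∃ M : ℝ, 0 ≤ M ∧ ∀ (i : Fin d) u, u ∈ Set.Icc (0:ℝ) T → |Z' i u| ≤ M := by
    intro Z' hZ'
    obtain ⟨C, hC⟩ := isCompact_Icc.exists_bound_of_continuousOn
      (s := Set.Icc (0:ℝ) T) (f := fun u => ∑ i : Fin d, |Z' i u|)
      ((continuous_finset_sum _ fun i _ => (hZ' i).abs).continuousOn)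
    refine ⟨max C 0, le_max_right _ _, fun i u hu => ?_⟩
    calc |Z' i u| ≤ ∑ j : Fin d, |Z' j u| :=
          Finset.single_le_sum (f := fun j => |Z' j u|) (fun j _ => abs_nonneg _) (Finset.mem_univ i)
      _ ≤ ‖∑ j : Fin d, |Z' j u|‖ := le_abs_self _
      _ ≤ C := hC u hu
      _ ≤ max C 0 := le_max_left _ _
  obtain ⟨Mx, hMx0, hMx⟩ := hbd X' hX'
  obtain ⟨My, hMy0, hMy⟩ := hbd Y' hY'
  set B : ℝ := Mx * T * (My * T) with hBdef
  have hB0 : 0 ≤ B := by positivity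
  -- coefficient bounds
  have hXb : ∀ (I : List (Fin d)) {s : ℝ}, s ∈ Set.Icc (0:ℝ) T →
      |Sig d X' I 0 s| ≤ (Mx * T) ^ I.length / (I.length)! := by
    intro I s hs
    refine (sig_bound hMx0 hX' hMx I le_rfl hs.1 hs.2).trans ?_
    rw [sub_zero]
    gcongr
    · exact mul_nonneg hMx0 hs.1
    · exact hs.2
  have hYb : ∀ (I : List (Fin d)) {s : ℝ}, s ∈ Set.Icc (0:ℝ) T →
      |Sig d Y' I 0 s| ≤ (My * T) ^ I.length / (I.length)! := by
    intro I s hs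
    refine (sig_bound hMy0 hY' hMy I le_rfl hs.1 hs.2).trans ?_
    rw [sub_zero]
    gcongr
    · exact mul_nonneg hMy0 hs.1
    · exact hs.2
  have hfac1 : ∀ n : ℕ, (1:ℝ) ≤ (n)! := fun n => Nat.one_le_cast.2 (Nat.factorial_pos n)
  -- product bound
  have hprod : ∀ (I : List (Fin d)) {s u : ℝ}, s ∈ Set.Icc (0:ℝ) T → u ∈ Set.Icc (0:ℝ) T →
      |Sig d X' I 0 s * Sig d Y' I 0 u| ≤ B ^ I.length / (I.length)! := by
    intro I s u hs hu
    rw [abs_mul]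
    calc |Sig d X' I 0 s| * |Sig d Y' I 0 u|
        ≤ ((Mx * T) ^ I.length / (I.length)!) * ((My * T) ^ I.length / (I.length)!) :=
          mul_le_mul (hXb I hs) (hYb I hu) (abs_nonneg _) (by positivity)
      _ ≤ ((Mx * T) ^ I.length / (I.length)!) * ((My * T) ^ I.length) := by
          gcongr
          exact div_le_self (by positivity) (hfac1 _)
      _ = B ^ I.length / (I.length)! := by rw [hBdef, mul_pow]; ring
  -- summability of the kernel series
  have hsum : ∀ {s u : ℝ}, s ∈ Set.Icc (0:ℝ) T → u ∈ Set.Icc (0:ℝ) T →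
      Summable (fun I : List (Fin d) => Sig d X' I 0 s * Sig d Y' I 0 u) := by
    intro s u hs hu
    refine Summable.of_abs ?_
    exact Summable.of_nonneg_of_le (fun _ => abs_nonneg _) (fun I => hprod I hs hu)
      (summable_list_aux d hB0)

  refine ⟨hsum ⟨t0, tT⟩ ⟨v0, vT⟩, ?_⟩
  have hfacne : ∀ n : ℕ, ((n)! : ℝ) ≠ 0 := fun n => by positivity
  -- bounds for the integrands appearing in the two tsum/integral swaps
  have hC1 : ∀ (p : Fin d × List (Fin d)) {s : ℝ}, s ∈ Set.Icc (0:ℝ) T →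
      |Sig d X' p.2 0 s * X' p.1 s * Sig d Y' (p.2 ++ [p.1]) 0 v|
        ≤ Mx * (My * T) * (B ^ p.2.length / (p.2.length)!) := by
    rintro ⟨i, J⟩ s hs
    have hc : |Sig d Y' (J ++ [i]) 0 v| ≤ (My * T) ^ (J.length + 1) := by
      have h := hYb (J ++ [i]) ⟨v0, vT⟩
      rw [List.length_append, List.length_singleton] at h
      exact h.trans (div_le_self (by positivity) (hfac1 _))
    calc |Sig d X' J 0 s * X' i s * Sig d Y' (J ++ [i]) 0 v|
        = |Sig d X' J 0 s| * |X' i s| * |Sig d Y' (J ++ [i]) 0 v| := by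
          rw [abs_mul, abs_mul]
      _ ≤ ((Mx * T) ^ J.length / (J.length)!) * Mx * (My * T) ^ (J.length + 1) := by
          refine mul_le_mul (mul_le_mul (hXb J hs) (hMx i s hs) (abs_nonneg _)
            (by positivity)) hc (abs_nonneg _) (by positivity)
      _ = Mx * (My * T) * (B ^ J.length / (J.length)!) := by
          rw [hBdef, pow_succ, mul_pow]
          field_simp
          ring
  have hC2 : ∀ (p : Fin d × List (Fin d)) {s u : ℝ}, s ∈ Set.Icc (0:ℝ) T →
      u ∈ Set.Icc (0:ℝ) T →
      |Sig d X' p.2 0 s * X' p.1 s * (Sig d Y' p.2 0 u * Y' p.1 u)|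
        ≤ Mx * My * (B ^ p.2.length / (p.2.length)!) := by
    rintro ⟨i, J⟩ s u hs hu
    calc |Sig d X' J 0 s * X' i s * (Sig d Y' J 0 u * Y' i u)|
        = |Sig d X' J 0 s| * |X' i s| * (|Sig d Y' J 0 u| * |Y' i u|) := by
          rw [abs_mul, abs_mul, abs_mul]
      _ ≤ ((Mx * T) ^ J.length / (J.length)!) * Mx * ((My * T) ^ J.length * My) := by
          refine mul_le_mul (mul_le_mul (hXb J hs) (hMx i s hs) (abs_nonneg _)
            (by positivity)) (mul_le_mul ((hYb J hu).trans (div_le_self (by positivity)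
              (hfac1 _))) (hMy i u hu) (abs_nonneg _) (by positivity))
            (by positivity) (by positivity)
      _ = Mx * My * (B ^ J.length / (J.length)!) := by
          rw [hBdef, mul_pow]
          ring
  have hsumC : Summable (fun p : Fin d × List (Fin d) => B ^ p.2.length / ((p.2.length))!) := by
    rw [summable_prod_of_nonneg (fun p => by positivity)]
    exact ⟨fun i => summable_list_aux d hB0, Summable.of_finite⟩
  -- peel off the empty word
  have hne : ∀ p : Fin d × List (Fin d), p.2 ++ [p.1] ≠ [] := fun p => by simp
  have hsplit : (∑' I : List (Fin d), Sig d X' I 0 t * Sig d Y' I 0 v)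
      = 1 + ∑' p : Fin d × List (Fin d),
          Sig d X' (p.2 ++ [p.1]) 0 t * Sig d Y' (p.2 ++ [p.1]) 0 v := by
    rw [(hsum ⟨t0, tT⟩ ⟨v0, vT⟩).tsum_eq_add_tsum_ite []]
    congr 1
    · show Sig d X' [] 0 t * Sig d Y' [] 0 v = 1
      simp [Sig]
    · have hinj : Function.Injective
          (fun p : Fin d × List (Fin d) => p.2 ++ [p.1]) := by
        rintro ⟨i, J⟩ ⟨i', J'⟩ h
        simp only [Prod.mk.injEq]
        have h' := congrArg List.reverse h
        simp only [List.reverse_append, List.reverse_singleton, List.singleton_append,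
          List.cons.injEq, List.reverse_inj] at h'
        exact ⟨h'.1, h'.2⟩
      have hsupp : (Function.support fun I : List (Fin d) =>
          ite (I = []) 0 (Sig d X' I 0 t * Sig d Y' I 0 v)) ⊆
          Set.range (fun p : Fin d × List (Fin d) => p.2 ++ [p.1]) := by
        intro I hI
        by_cases h0 : I = []
        · exact absurd (by simp [h0]) hI
        · exact ⟨(I.getLast h0, I.dropLast), List.dropLast_append_getLast h0⟩
      rw [← hinj.tsum_eq hsupp]
      exact tsum_congr fun p => if_neg (hne p)
  rw [hsplit]
  congr 1
  set F : (Fin d × List (Fin d)) → ℝ → ℝ := fun p s =>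
    Sig d X' p.2 0 s * X' p.1 s * Sig d Y' (p.2 ++ [p.1]) 0 v with hFdef
  have hstep1 : ∀ p : Fin d × List (Fin d),
      Sig d X' (p.2 ++ [p.1]) 0 t * Sig d Y' (p.2 ++ [p.1]) 0 v
        = ∫ s in Set.Ioc (0:ℝ) t, F p s := by
    intro p
    rw [sig_concat hX' p.2 p.1 t0, intervalIntegral.integral_of_le t0,
      ← MeasureTheory.integral_mul_const]
  have haes1 : ∀ p : Fin d × List (Fin d),
      AEStronglyMeasurable (F p) (volume.restrict (Set.Ioc (0:ℝ) t)) := fun p =>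
    (((sig_cont_right hX' p.2 0).mul (hX' p.1)).mul continuous_const).aestronglyMeasurable
  have hlint1 : (∑' p : Fin d × List (Fin d),
      ∫⁻ s, ‖F p s‖₊ ∂(volume.restrict (Set.Ioc (0:ℝ) t))) ≠ ⊤ := by
    have hb : ∀ p : Fin d × List (Fin d),
        (∫⁻ s, ‖F p s‖₊ ∂(volume.restrict (Set.Ioc (0:ℝ) t)))
          ≤ ENNReal.ofReal (Mx * (My * T) * (B ^ p.2.length / (p.2.length)!))
            * ENNReal.ofReal t := by
      intro p
      calc (∫⁻ s, ‖F p s‖₊ ∂(volume.restrict (Set.Ioc (0:ℝ) t)))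
          ≤ ∫⁻ _, ENNReal.ofReal (Mx * (My * T) * (B ^ p.2.length / (p.2.length)!))
              ∂(volume.restrict (Set.Ioc (0:ℝ) t)) := by
            refine lintegral_mono_ae ?_
            filter_upwards [ae_restrict_mem measurableSet_Ioc] with s hs
            rw [← enorm_eq_nnnorm, ← ofReal_norm]
            refine ENNReal.ofReal_le_ofReal ?_
            rw [Real.norm_eq_abs]
            exact hC1 p ⟨hs.1.le, hs.2.trans tT⟩
        _ = ENNReal.ofReal (Mx * (My * T) * (B ^ p.2.length / (p.2.length)!))
              * volume (Set.Ioc (0:ℝ) t) := by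
            rw [lintegral_const, Measure.restrict_apply_univ]
        _ = _ := by rw [Real.volume_Ioc, sub_zero]
    refine ((ENNReal.tsum_le_tsum hb).trans_lt ?_).ne
    rw [ENNReal.tsum_mul_right,
      ← ENNReal.ofReal_tsum_of_nonneg (fun p => by positivity) (hsumC.mul_left _)]
    exact ENNReal.mul_lt_top ENNReal.ofReal_lt_top ENNReal.ofReal_lt_top
  have hswap1 : (∑' p : Fin d × List (Fin d), ∫ s in Set.Ioc (0:ℝ) t, F p s)
      = ∫ s in Set.Ioc (0:ℝ) t, ∑' p : Fin d × List (Fin d), F p s :=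
    (integral_tsum haes1 hlint1).symm
  have hinner : ∀ s ∈ Set.Ioc (0:ℝ) t,
      (∑' p : Fin d × List (Fin d), F p s)
        = ∫ u in (0:ℝ)..v, (∑' I : List (Fin d), Sig d X' I 0 s * Sig d Y' I 0 u)
            * (∑ i : Fin d, X' i s * Y' i u) := by
    intro s hsIoc
    have hsT : s ∈ Set.Icc (0:ℝ) T := ⟨hsIoc.1.le, hsIoc.2.trans tT⟩
    set G : (Fin d × List (Fin d)) → ℝ → ℝ := fun p u =>
      Sig d X' p.2 0 s * X' p.1 s * (Sig d Y' p.2 0 u * Y' p.1 u) with hGdef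
    have hFs : ∀ p : Fin d × List (Fin d), F p s = ∫ u in Set.Ioc (0:ℝ) v, G p u := by
      intro p
      rw [hFdef]
      simp only
      rw [sig_concat hY' p.2 p.1 v0, intervalIntegral.integral_of_le v0,
        ← MeasureTheory.integral_const_mul]
    have haes2 : ∀ p : Fin d × List (Fin d),
        AEStronglyMeasurable (G p) (volume.restrict (Set.Ioc (0:ℝ) v)) := fun p =>
      (continuous_const.mul ((sig_cont_right hY' p.2 0).mul (hY' p.1))).aestronglyMeasurable
    have hlint2 : (∑' p : Fin d × List (Fin d),
        ∫⁻ u, ‖G p u‖₊ ∂(volume.restrict (Set.Ioc (0:ℝ) v))) ≠ ⊤ := by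
      have hb : ∀ p : Fin d × List (Fin d),
          (∫⁻ u, ‖G p u‖₊ ∂(volume.restrict (Set.Ioc (0:ℝ) v)))
            ≤ ENNReal.ofReal (Mx * My * (B ^ p.2.length / (p.2.length)!))
              * ENNReal.ofReal v := by
        intro p
        calc (∫⁻ u, ‖G p u‖₊ ∂(volume.restrict (Set.Ioc (0:ℝ) v)))
            ≤ ∫⁻ _, ENNReal.ofReal (Mx * My * (B ^ p.2.length / (p.2.length)!))
                ∂(volume.restrict (Set.Ioc (0:ℝ) v)) := by
              refine lintegral_mono_ae ?_
              filter_upwards [ae_restrict_mem measurableSet_Ioc] with u hu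
              rw [← enorm_eq_nnnorm, ← ofReal_norm]
              refine ENNReal.ofReal_le_ofReal ?_
              rw [Real.norm_eq_abs]
              exact hC2 p hsT ⟨hu.1.le, hu.2.trans vT⟩
          _ = ENNReal.ofReal (Mx * My * (B ^ p.2.length / (p.2.length)!))
                * volume (Set.Ioc (0:ℝ) v) := by
              rw [lintegral_const, Measure.restrict_apply_univ]
          _ = _ := by rw [Real.volume_Ioc, sub_zero]
      refine ((ENNReal.tsum_le_tsum hb).trans_lt ?_).ne
      rw [ENNReal.tsum_mul_right,
        ← ENNReal.ofReal_tsum_of_nonneg (fun p => by positivity) (hsumC.mul_left _)]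
      exact ENNReal.mul_lt_top ENNReal.ofReal_lt_top ENNReal.ofReal_lt_top
    have hswap2 : (∑' p : Fin d × List (Fin d), ∫ u in Set.Ioc (0:ℝ) v, G p u)
        = ∫ u in Set.Ioc (0:ℝ) v, ∑' p : Fin d × List (Fin d), G p u :=
      (integral_tsum haes2 hlint2).symm
    have hptw : ∀ u ∈ Set.Ioc (0:ℝ) v,
        (∑' p : Fin d × List (Fin d), G p u)
          = (∑' I : List (Fin d), Sig d X' I 0 s * Sig d Y' I 0 u)
              * (∑ i : Fin d, X' i s * Y' i u) := by
      intro u huIoc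
      have huT : u ∈ Set.Icc (0:ℝ) T := ⟨huIoc.1.le, huIoc.2.trans vT⟩
      have hre : (fun p : Fin d × List (Fin d) => G p u)
          = fun p : Fin d × List (Fin d) =>
            (X' p.1 s * Y' p.1 u) * (Sig d X' p.2 0 s * Sig d Y' p.2 0 u) := by
        funext p
        rw [hGdef]
        ring
      have hsG : Summable fun p : Fin d × List (Fin d) =>
          (X' p.1 s * Y' p.1 u) * (Sig d X' p.2 0 s * Sig d Y' p.2 0 u) := by
        rw [← hre]
        exact Summable.of_abs (Summable.of_nonneg_of_le (fun _ => abs_nonneg _)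
          (fun p => hC2 p hsT huT) (hsumC.mul_left _))
      rw [hre, hsG.tsum_prod' (fun i => by simpa using (hsum hsT huT).mul_left (X' i s * Y' i u))]
      rw [tsum_fintype]
      have hcm : ∀ i : Fin d,
          (∑' J : List (Fin d), (X' i s * Y' i u) * (Sig d X' J 0 s * Sig d Y' J 0 u))
            = (X' i s * Y' i u) * ∑' J : List (Fin d), Sig d X' J 0 s * Sig d Y' J 0 u :=
        fun i => tsum_mul_left
      rw [Finset.sum_congr rfl (fun i _ => hcm i), ← Finset.sum_mul]
      ring
    calc (∑' p : Fin d × List (Fin d), F p s)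
        = ∑' p : Fin d × List (Fin d), ∫ u in Set.Ioc (0:ℝ) v, G p u := tsum_congr hFs
      _ = ∫ u in Set.Ioc (0:ℝ) v, ∑' p : Fin d × List (Fin d), G p u := hswap2
      _ = ∫ u in Set.Ioc (0:ℝ) v,
            (∑' I : List (Fin d), Sig d X' I 0 s * Sig d Y' I 0 u)
              * (∑ i : Fin d, X' i s * Y' i u) :=
          setIntegral_congr_fun measurableSet_Ioc hptw
      _ = ∫ u in (0:ℝ)..v,
            (∑' I : List (Fin d), Sig d X' I 0 s * Sig d Y' I 0 u)
              * (∑ i : Fin d, X' i s * Y' i u) :=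
          (intervalIntegral.integral_of_le v0).symm
  calc (∑' p : Fin d × List (Fin d),
        Sig d X' (p.2 ++ [p.1]) 0 t * Sig d Y' (p.2 ++ [p.1]) 0 v)
      = ∑' p : Fin d × List (Fin d), ∫ s in Set.Ioc (0:ℝ) t, F p s := tsum_congr hstep1
    _ = ∫ s in Set.Ioc (0:ℝ) t, ∑' p : Fin d × List (Fin d), F p s := hswap1
    _ = ∫ s in Set.Ioc (0:ℝ) t, ∫ u in (0:ℝ)..v,
          (∑' I : List (Fin d), Sig d X' I 0 s * Sig d Y' I 0 u)
            * (∑ i : Fin d, X' i s * Y' i u) :=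
        setIntegral_congr_fun measurableSet_Ioc hinner
    _ = ∫ s in (0:ℝ)..t, ∫ u in (0:ℝ)..v,
          (∑' I : List (Fin d), Sig d X' I 0 s * Sig d Y' I 0 u)
            * (∑ i : Fin d, X' i s * Y' i u) :=
        (intervalIntegral.integral_of_le t0).symm
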